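/- arXiv:1805.05801 — 3 statements merged into one kernel-verified Lean document; each statement's English description precedes it below -/
import Mathlib

section
/- The squared Fischer-Burmeister merit function Ψ_FB(a,b) = (√(a² + b²) − (a + b))² is continuously differentiable on all of ℝ², including at the origin. -/
noncomputable section FBaux

private def nn (p : ℝ × ℝ) : ℝ := Real.sqrt (p.1 ^ 2 + p.2 ^ 2)

private def hFB (p : ℝ × ℝ) : ℝ := (p.1 + p.2) * nn p

private def fstCLM : ℝ × ℝ →L[ℝ] ℝ := ContinuousLinearMap.fst ℝ ℝ ℝ
private def sndCLM : ℝ × ℝ →L[ℝ] ℝ := ContinuousLinearMap.snd ℝ ℝ ℝ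

private def c1 (p : ℝ × ℝ) : ℝ := nn p + (p.1 + p.2) * p.1 / nn p
private def c2 (p : ℝ × ℝ) : ℝ := nn p + (p.1 + p.2) * p.2 / nn p

private def FF (p : ℝ × ℝ) : ℝ × ℝ →L[ℝ] ℝ := c1 p • fstCLM + c2 p • sndCLM

private lemma nn_nonneg (p : ℝ × ℝ) : 0 ≤ nn p := Real.sqrt_nonneg _

private lemma sq_nn (p : ℝ × ℝ) : nn p ^ 2 = p.1 ^ 2 + p.2 ^ 2 :=
  Real.sq_sqrt (by positivity)

private lemma abs_fst_le (p : ℝ × ℝ) : |p.1| ≤ nn p := by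
  rw [← Real.sqrt_sq_eq_abs]
  exact Real.sqrt_le_sqrt (by nlinarith [sq_nonneg p.2])

private lemma abs_snd_le (p : ℝ × ℝ) : |p.2| ≤ nn p := by
  rw [← Real.sqrt_sq_eq_abs]
  exact Real.sqrt_le_sqrt (by nlinarith [sq_nonneg p.1])

private lemma nn_le (p : ℝ × ℝ) : nn p ≤ |p.1| + |p.2| := by
  rw [← Real.sqrt_sq (by positivity : (0:ℝ) ≤ |p.1| + |p.2|)]
  apply Real.sqrt_le_sqrt
  nlinarith [abs_nonneg p.1, abs_nonneg p.2, sq_abs p.1, sq_abs p.2]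

private lemma nn_pos {p : ℝ × ℝ} (hp : p ≠ 0) : 0 < nn p := by
  apply Real.sqrt_pos.2
  have h1 : p.1 ≠ 0 ∨ p.2 ≠ 0 := by
    by_contra hc
    push_neg at hc
    exact hp (Prod.ext hc.1 hc.2)
  rcases h1 with h1 | h1
  · have := pow_pos (abs_pos.2 h1) 2
    rw [sq_abs] at this
    nlinarith [sq_nonneg p.2]
  · have := pow_pos (abs_pos.2 h1) 2
    rw [sq_abs] at this
    nlinarith [sq_nonneg p.1]

private lemma continuous_nn : Continuous nn :=
  Real.continuous_sqrt.comp (by continuity)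

private lemma abs_c1_le (p : ℝ × ℝ) : |c1 p| ≤ nn p + |p.1 + p.2| := by
  have hdiv : |(p.1 + p.2) * p.1 / nn p| ≤ |p.1 + p.2| := by
    rcases eq_or_ne (nn p) 0 with h | h
    · simp [h]
    · rw [abs_div, div_le_iff₀ (abs_pos.2 h), abs_mul, abs_of_nonneg (nn_nonneg p)]
      exact mul_le_mul_of_nonneg_left (abs_fst_le p) (abs_nonneg _)
  calc |c1 p| ≤ |nn p| + |(p.1 + p.2) * p.1 / nn p| := abs_add_le _ _
    _ ≤ nn p + |p.1 + p.2| := by rw [abs_of_nonneg (nn_nonneg p)]; linarith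

private lemma abs_c2_le (p : ℝ × ℝ) : |c2 p| ≤ nn p + |p.1 + p.2| := by
  have hdiv : |(p.1 + p.2) * p.2 / nn p| ≤ |p.1 + p.2| := by
    rcases eq_or_ne (nn p) 0 with h | h
    · simp [h]
    · rw [abs_div, div_le_iff₀ (abs_pos.2 h), abs_mul, abs_of_nonneg (nn_nonneg p)]
      exact mul_le_mul_of_nonneg_left (abs_snd_le p) (abs_nonneg _)
  calc |c2 p| ≤ |nn p| + |(p.1 + p.2) * p.2 / nn p| := abs_add_le _ _
    _ ≤ nn p + |p.1 + p.2| := by rw [abs_of_nonneg (nn_nonneg p)]; linarith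

private lemma continuous_c1 : Continuous c1 := by
  rw [continuous_iff_continuousAt]
  intro p
  rcases eq_or_ne p 0 with rfl | hp
  · have h0 : c1 0 = 0 := by simp [c1, nn]
    rw [ContinuousAt, h0]
    apply squeeze_zero_norm (fun z => abs_c1_le z)
    have : Filter.Tendsto (fun z : ℝ × ℝ => nn z + |z.1 + z.2|) (nhds 0)
        (nhds (nn 0 + |(0:ℝ×ℝ).1 + (0:ℝ×ℝ).2|)) :=
      (continuous_nn.add (by continuity)).continuousAt
    simpa [nn] using this
  · unfold c1
    exact (continuous_nn.continuousAt).add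
      (((by continuity : Continuous fun z : ℝ × ℝ => (z.1 + z.2) * z.1).continuousAt).div
        continuous_nn.continuousAt (ne_of_gt (nn_pos hp)))

private lemma continuous_c2 : Continuous c2 := by
  rw [continuous_iff_continuousAt]
  intro p
  rcases eq_or_ne p 0 with rfl | hp
  · have h0 : c2 0 = 0 := by simp [c2, nn]
    rw [ContinuousAt, h0]
    apply squeeze_zero_norm (fun z => abs_c2_le z)
    have : Filter.Tendsto (fun z : ℝ × ℝ => nn z + |z.1 + z.2|) (nhds 0)
        (nhds (nn 0 + |(0:ℝ×ℝ).1 + (0:ℝ×ℝ).2|)) :=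
      (continuous_nn.add (by continuity)).continuousAt
    simpa [nn] using this
  · unfold c2
    exact (continuous_nn.continuousAt).add
      (((by continuity : Continuous fun z : ℝ × ℝ => (z.1 + z.2) * z.2).continuousAt).div
        continuous_nn.continuousAt (ne_of_gt (nn_pos hp)))

private lemma continuous_FF : Continuous FF :=
  (continuous_c1.smul continuous_const).add (continuous_c2.smul continuous_const)

set_option maxHeartbeats 1000000 in
private lemma hasFDerivAt_hFB (p : ℝ × ℝ) : HasFDerivAt hFB (FF p) p := by
  rcases eq_or_ne p 0 with rfl | hp
  · have hF0 : FF 0 = 0 := by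
      have h1 : c1 0 = 0 := by simp [c1, nn]
      have h2 : c2 0 = 0 := by simp [c2, nn]
      simp [FF, h1, h2]
    rw [hF0, hasFDerivAt_iff_isLittleO_nhds_zero]
    have h0 : hFB 0 = 0 := by simp [hFB, nn]
    simp only [zero_add, ContinuousLinearMap.zero_apply, sub_zero, h0]
    rw [Asymptotics.isLittleO_iff]
    intro c hc
    rw [Metric.eventually_nhds_iff]
    refine ⟨c / 4, by linarith, fun {z} hz => ?_⟩
    rw [dist_zero_right] at hz
    have h1 : |z.1| ≤ ‖z‖ := (Real.norm_eq_abs z.1) ▸ norm_fst_le z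
    have h2 : |z.2| ≤ ‖z‖ := (Real.norm_eq_abs z.2) ▸ norm_snd_le z
    have h3 := nn_le z
    have h4 := nn_nonneg z
    have h5 : (0:ℝ) ≤ ‖z‖ := norm_nonneg z
    have hA : |z.1 + z.2| ≤ 2 * ‖z‖ := by
      have := abs_add_le z.1 z.2; linarith
    have hB : nn z ≤ 2 * ‖z‖ := by linarith
    have hprod : |z.1 + z.2| * nn z ≤ (2 * ‖z‖) * (2 * ‖z‖) :=
      mul_le_mul hA hB h4 (by linarith)
    have : ‖hFB z‖ = |z.1 + z.2| * nn z := by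
      rw [Real.norm_eq_abs, hFB, abs_mul, abs_of_nonneg h4]
    rw [this]
    nlinarith
  · have hQ : HasFDerivAt (fun q : ℝ × ℝ => q.1 ^ 2 + q.2 ^ 2)
        ((p.1 • fstCLM + p.1 • fstCLM) + (p.2 • sndCLM + p.2 • sndCLM)) p := by
      have h := ((hasFDerivAt_fst (𝕜 := ℝ) (p := p)).mul (hasFDerivAt_fst (𝕜 := ℝ) (p := p))).add
        ((hasFDerivAt_snd (𝕜 := ℝ) (p := p)).mul (hasFDerivAt_snd (𝕜 := ℝ) (p := p)))
      simp only [pow_two]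
      exact h
    have hQ0 : p.1 ^ 2 + p.2 ^ 2 ≠ 0 := by
      have h1 := nn_pos hp
      have h2 := sq_nn p
      nlinarith
    have hn : HasFDerivAt nn
        ((1 / (2 * Real.sqrt (p.1 ^ 2 + p.2 ^ 2))) •
          ((p.1 • fstCLM + p.1 • fstCLM) + (p.2 • sndCLM + p.2 • sndCLM))) p :=
      (Real.hasDerivAt_sqrt hQ0).comp_hasFDerivAt p hQ
    have hL : HasFDerivAt (fun q : ℝ × ℝ => q.1 + q.2) (fstCLM + sndCLM) p :=
      (hasFDerivAt_fst (𝕜 := ℝ) (p := p)).add (hasFDerivAt_snd (𝕜 := ℝ) (p := p))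
    have hmul := hL.mul hn
    have hn0 : nn p ≠ 0 := ne_of_gt (nn_pos hp)
    have heq : (p.1 + p.2) • ((1 / (2 * Real.sqrt (p.1 ^ 2 + p.2 ^ 2))) •
          ((p.1 • fstCLM + p.1 • fstCLM) + (p.2 • sndCLM + p.2 • sndCLM)))
        + nn p • (fstCLM + sndCLM) = FF p := by
      have hs : Real.sqrt (p.1 ^ 2 + p.2 ^ 2) = nn p := rfl
      ext x
      · simp only [FF, c1, fstCLM, sndCLM, hs, ContinuousLinearMap.add_apply,
          ContinuousLinearMap.smul_apply, ContinuousLinearMap.coe_fst',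
          ContinuousLinearMap.coe_snd', smul_eq_mul, ContinuousLinearMap.comp_apply,
          ContinuousLinearMap.inl_apply, ContinuousLinearMap.inr_apply]
        field_simp
        ring
      · simp only [FF, c2, fstCLM, sndCLM, hs, ContinuousLinearMap.add_apply,
          ContinuousLinearMap.smul_apply, ContinuousLinearMap.coe_fst',
          ContinuousLinearMap.coe_snd', smul_eq_mul, ContinuousLinearMap.comp_apply,
          ContinuousLinearMap.inl_apply, ContinuousLinearMap.inr_apply]
        field_simp
        ring
    rw [← heq]
    exact hmul

private lemma contDiff_hFB : ContDiff ℝ 1 hFB := by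
  rw [contDiff_one_iff_fderiv]
  have hfd : (fderiv ℝ hFB) = FF := funext fun p => (hasFDerivAt_hFB p).fderiv
  exact ⟨fun p => (hasFDerivAt_hFB p).differentiableAt, hfd ▸ continuous_FF⟩

end FBaux

theorem FB_merit_function_C1 :
    ContDiff ℝ 1 (fun p : ℝ × ℝ =>
      (Real.sqrt (p.1 ^ 2 + p.2 ^ 2) - (p.1 + p.2)) ^ 2) := by
  have heq : (fun p : ℝ × ℝ => (Real.sqrt (p.1 ^ 2 + p.2 ^ 2) - (p.1 + p.2)) ^ 2)
      = fun p : ℝ × ℝ => (p.1 ^ 2 + p.2 ^ 2) + (p.1 + p.2) ^ 2 - 2 * hFB p := by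
    funext p
    have h := sq_nn p
    simp only [hFB, nn] at *
    nlinarith [h]
  rw [heq]
  have hpoly : ContDiff ℝ 1 (fun p : ℝ × ℝ => (p.1 ^ 2 + p.2 ^ 2) + (p.1 + p.2) ^ 2) :=
    ((contDiff_fst.pow 2).add (contDiff_snd.pow 2)).add
      ((contDiff_fst.add contDiff_snd).pow 2)
  exact hpoly.sub (contDiff_const.mul contDiff_hFB)
end

section
/- For every τ > 0 and all a, b ∈ ℝ, the smooth Fischer-Burmeister function satisfies G_FB(a,b,τ) = 0 if and only if a > 0, b > 0, and a·b = τ. -/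
theorem smooth_FB_zero_iff (τ : ℝ) (hτ : 0 < τ) (a b : ℝ) :
    Real.sqrt (a ^ 2 + b ^ 2 + 2 * τ) - (a + b) = 0 ↔
      0 < a ∧ 0 < b ∧ a * b = τ := by
  constructor
  · intro h
    have heq : Real.sqrt (a ^ 2 + b ^ 2 + 2 * τ) = a + b := by linarith
    have hnn : 0 ≤ a + b := heq ▸ Real.sqrt_nonneg _
    have harg : 0 ≤ a ^ 2 + b ^ 2 + 2 * τ := by positivity
    have hsq : a ^ 2 + b ^ 2 + 2 * τ = (a + b) ^ 2 := by
      have := Real.sq_sqrt harg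
      rw [heq] at this; linarith [this]
    have hab : a * b = τ := by nlinarith
    have hapos : 0 < a := by nlinarith
    have hbpos : 0 < b := by nlinarith
    exact ⟨hapos, hbpos, hab⟩
  · rintro ⟨ha, hb, hab⟩
    have : a ^ 2 + b ^ 2 + 2 * τ = (a + b) ^ 2 := by nlinarith
    rw [this, Real.sqrt_sq (by linarith)]
    ring
end

section
/- For τ > 0, the function G_FB(·,·,τ) is strictly decreasing in each argument: if a₁ < a₂ then G_FB(a₂,b,τ) < G_FB(a₁,b,τ) for every b ∈ ℝ. -/
theorem smooth_FB_strict_anti (τ : ℝ) (hτ : 0 < τ) (b a₁ a₂ : ℝ) (h : a₁ < a₂) :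
    Real.sqrt (a₂ ^ 2 + b ^ 2 + 2 * τ) - (a₂ + b) <
      Real.sqrt (a₁ ^ 2 + b ^ 2 + 2 * τ) - (a₁ + b) := by
  set s₁ := Real.sqrt (a₁ ^ 2 + b ^ 2 + 2 * τ) with hs₁
  set s₂ := Real.sqrt (a₂ ^ 2 + b ^ 2 + 2 * τ) with hs₂
  have hc : (0:ℝ) < b ^ 2 + 2 * τ := by positivity
  have hsq1 : s₁ ^ 2 = a₁ ^ 2 + b ^ 2 + 2 * τ := by
    rw [hs₁, Real.sq_sqrt (by positivity)]
  have hsq2 : s₂ ^ 2 = a₂ ^ 2 + b ^ 2 + 2 * τ := by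
    rw [hs₂, Real.sq_sqrt (by positivity)]
  have h1 : a₁ < s₁ := by
    have : |a₁| < s₁ := by
      rw [hs₁, ← Real.sqrt_sq_eq_abs]
      exact Real.sqrt_lt_sqrt (sq_nonneg _) (by linarith)
    exact lt_of_le_of_lt (le_abs_self _) this
  have h2 : a₂ < s₂ := by
    have : |a₂| < s₂ := by
      rw [hs₂, ← Real.sqrt_sq_eq_abs]
      exact Real.sqrt_lt_sqrt (sq_nonneg _) (by linarith)
    exact lt_of_le_of_lt (le_abs_self _) this
  have hpos : 0 < s₁ + s₂ := by nlinarith [Real.sqrt_nonneg (a₁ ^ 2 + b ^ 2 + 2 * τ), Real.sqrt_nonneg (a₂ ^ 2 + b ^ 2 + 2 * τ), hsq1, hsq2, hc]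
  have key : (s₂ - s₁) * (s₁ + s₂) < (a₂ - a₁) * (s₁ + s₂) := by
    have : (s₂ - s₁) * (s₁ + s₂) = (a₂ - a₁) * (a₂ + a₁) := by nlinarith [hsq1, hsq2]
    rw [this]
    exact mul_lt_mul_of_pos_left (by linarith) (by linarith)
  have := lt_of_mul_lt_mul_right (by linarith [key] : (s₂ - s₁) * (s₁ + s₂) < (a₂ - a₁) * (s₁ + s₂)) (le_of_lt hpos)
  linarith
end
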